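/- Let G be a finite simple graph on n vertices that admits a join, i.e., V(G) can be partitioned into two nonempty sets V1 and V2 such that every vertex of V1 is adjacent to every vertex of V2. Then G contains an odd set of size at least 2·⌈(n−2)/4⌉; that is, mos(G) ≥ 2·⌈(n−2)/4⌉. -/

import Mathlib

open Matrix LinearMap Module Finset

/-- A set `S` of vertices of `G` is *odd* if every vertex of `S` has an odd number of
neighbors inside `S`. -/
def SimpleGraph.IsOddSet {V : Type*} (G : SimpleGraph V) (S : Set V) : Prop :=
  ∀ v ∈ S, Odd (S ∩ G.neighborSet v).ncard

theorem symm_solvable {n : Type*} [Fintype n] [DecidableEq n]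
    {F : Type*} [Field F] (M : Matrix n n F) (hM : M.IsSymm) (d : n → F)
    (h : ∀ z, M.mulVec z = 0 → d ⬝ᵥ z = 0) : ∃ y, M.mulVec y = d := by
  classical
  set B : LinearMap.BilinForm F (n → F) := Matrix.toBilin' (1 : Matrix n n F) with hB
  have hBapp : ∀ v w, B v w = v ⬝ᵥ w := by
    intro v w; rw [hB, Matrix.toBilin'_apply', Matrix.one_mulVec]
  have hBrefl : B.IsRefl := by
    intro v w hvw; rw [hBapp] at *; rwa [dotProduct_comm]
  have hBnd : B.Nondegenerate := by
    refine Matrix.Nondegenerate.toBilin' ?_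
    exact Matrix.nondegenerate_of_det_ne_zero (by simp)
  set T := M.mulVecLin with hT
  set K := LinearMap.ker T with hK
  have hle : LinearMap.range T ≤ B.orthogonal K := by
    rintro x ⟨y, rfl⟩
    rw [LinearMap.BilinForm.mem_orthogonal_iff]
    intro z hz
    have hz' : M.mulVec z = 0 := hz
    show B z (T y) = 0
    rw [hBapp]
    calc z ⬝ᵥ M.mulVec y = M.vecMul z ⬝ᵥ y := (Matrix.dotProduct_mulVec _ _ _)
      _ = M.mulVec z ⬝ᵥ y := by rw [← Matrix.mulVec_transpose, hM.eq]
      _ = 0 := by rw [hz', zero_dotProduct]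
  have hrange : LinearMap.range T = B.orthogonal K := by
    apply Submodule.eq_of_le_of_finrank_eq hle
    rw [LinearMap.BilinForm.finrank_orthogonal hBnd]
    have h1 : finrank F (LinearMap.range T) + finrank F K = finrank F (n → F) :=
      LinearMap.finrank_range_add_finrank_ker T
    have h2 : finrank F K ≤ finrank F (n → F) := Submodule.finrank_le K
    omega
  have hd : d ∈ B.orthogonal K := by
    rw [LinearMap.BilinForm.mem_orthogonal_iff]
    intro z hz
    show B z d = 0
    rw [hBapp, dotProduct_comm]
    exact h z hz
  rw [← hrange] at hd
  exact hd

section joinsec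

lemma zmod2_cases : ∀ x : ZMod 2, x = 0 ∨ x = 1 := by decide

lemma zmod2_mul_self : ∀ x : ZMod 2, x * x = x := by decide

lemma cast_eq_zero_iff_even (n : ℕ) : (n : ZMod 2) = 0 ↔ Even n := by
  rw [ZMod.natCast_eq_zero_iff, Nat.even_iff, Nat.dvd_iff_mod_eq_zero]

lemma cast_eq_one_iff_odd (n : ℕ) : (n : ZMod 2) = 1 ↔ Odd n := by
  rw [← Nat.not_even_iff_odd, ← cast_eq_zero_iff_even]
  rcases zmod2_cases (n : ZMod 2) with h | h <;> rw [h] <;> simp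

variable {V : Type*} [Fintype V] [DecidableEq V] (G : SimpleGraph V) [DecidableRel G.Adj]

/-- Gallai-type even/odd partition of any finite vertex subset. -/
lemma gallai_even_odd (W : Finset V) :
    ∃ X Y : Finset V, X ∪ Y = W ∧ Disjoint X Y ∧
      (∀ v ∈ X, Even ((X.filter (fun u => G.Adj v u)).card)) ∧
      (∀ v ∈ Y, Odd ((Y.filter (fun u => G.Adj v u)).card)) ∧
      Even Y.card := by
  classical
  set A : Matrix V V (ZMod 2) :=
    fun v u => if v ∈ W ∧ u ∈ W ∧ G.Adj v u then 1 else 0 with hAdef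
  have hA : ∀ i j, A i j = A j i := by
    intro i j
    simp only [hAdef]
    by_cases h : i ∈ W ∧ j ∈ W ∧ G.Adj i j
    · rw [if_pos h, if_pos ⟨h.2.1, h.1, h.2.2.symm⟩]
    · rw [if_neg h, if_neg (fun h' => h ⟨h'.2.1, h'.1, h'.2.2.symm⟩)]
  have hAdiag : ∀ i, A i i = 0 := by
    intro i; simp only [hAdef]
    rw [if_neg (fun h' => G.irrefl h'.2.2)]
  have hAW : ∀ v u, v ∉ W → A v u = 0 := by
    intro v u hv; simp only [hAdef]; rw [if_neg (fun h' => hv h'.1)]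
  set d : V → ZMod 2 := fun v => ∑ u, A v u with hddef
  set M : Matrix V V (ZMod 2) := A + Matrix.diagonal d + 1 with hMdef
  have hMapp : ∀ z v, (M.mulVec z) v = (A.mulVec z) v + d v * z v + z v := by
    intro z v
    rw [hMdef, Matrix.add_mulVec, Matrix.add_mulVec, Matrix.one_mulVec]
    simp [Matrix.mulVec_diagonal]
  -- z ⬝ᵥ A.mulVec z = 0 for all z
  have zAz : ∀ z : V → ZMod 2, z ⬝ᵥ A.mulVec z = 0 := by
    intro z
    have : z ⬝ᵥ A.mulVec z = ∑ p ∈ Finset.univ ×ˢ Finset.univ,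
        z p.1 * A p.1 p.2 * z p.2 := by
      rw [Finset.sum_product]
      simp only [Matrix.mulVec, dotProduct]
      rw [Finset.sum_congr rfl]
      intro i _
      rw [Finset.mul_sum]
      exact Finset.sum_congr rfl fun j _ => by ring
    rw [this]
    apply Finset.sum_involution (fun p _ => (p.2, p.1))
    · intro p _
      have : z p.2 * A p.2 p.1 * z p.1 = z p.1 * A p.1 p.2 * z p.2 := by
        rw [hA p.2 p.1]; ring
      rw [this]
      exact CharTwo.add_self_eq_zero _
    · intro p _ hne
      intro heq
      have h1 : p.2 = p.1 := congrArg Prod.fst heq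
      apply hne
      rw [← h1, hAdiag]
      ring
    · intro p hp; exact Finset.mem_product.mpr ⟨Finset.mem_univ _, Finset.mem_univ _⟩
    · intro p _; rfl
  -- column sums equal d
  have colsum : ∀ u, (∑ v, A v u) = d u := by
    intro u
    show _ = (∑ v, A u v)
    exact Finset.sum_congr rfl fun v _ => hA v u
  -- solvability hypothesis
  have hsolv : ∃ y, M.mulVec y = d := by
    apply symm_solvable M
    · -- M symmetric
      rw [hMdef]
      apply Matrix.IsSymm.add
      apply Matrix.IsSymm.add
      · ext i j; exact hA j i
      · exact Matrix.isSymm_diagonal d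
      · exact Matrix.isSymm_one
    · intro z hz
      have star : ∀ v, (A.mulVec z) v + d v * z v + z v = 0 := by
        intro v; rw [← hMapp]; rw [hz]; rfl
      have eq1 : z ⬝ᵥ A.mulVec z + d ⬝ᵥ z + (∑ v, z v) = 0 := by
        have : ∀ v, z v * ((A.mulVec z) v + d v * z v + z v) = 0 := by
          intro v; rw [star v]; ring
        calc z ⬝ᵥ A.mulVec z + d ⬝ᵥ z + (∑ v, z v)
            = ∑ v, z v * ((A.mulVec z) v + d v * z v + z v) := by
              simp only [dotProduct]
              rw [← Finset.sum_add_distrib, ← Finset.sum_add_distrib]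
              apply Finset.sum_congr rfl
              intro v _
              have h2 : z v * z v = z v := zmod2_mul_self _
              rw [mul_add, mul_add, show z v * (d v * z v) = d v * (z v * z v) by ring, h2]
          _ = 0 := by simp [this]
      have eq2 : d ⬝ᵥ z + d ⬝ᵥ z + (∑ v, z v) = 0 := by
        have hsum : ∑ v, (A.mulVec z) v = d ⬝ᵥ z := by
          simp only [Matrix.mulVec, dotProduct]
          rw [Finset.sum_comm]
          apply Finset.sum_congr rfl
          intro u _
          rw [← Finset.sum_mul, colsum u]
        calc d ⬝ᵥ z + d ⬝ᵥ z + (∑ v, z v)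
            = ∑ v, ((A.mulVec z) v + d v * z v + z v) := by
              rw [Finset.sum_add_distrib, Finset.sum_add_distrib, hsum]; rfl
          _ = 0 := by simp [star]
      have hz0 : (∑ v, z v) = 0 := by
        have := eq2
        rwa [CharTwo.add_self_eq_zero, zero_add] at this
      rw [zAz z, zero_add, hz0, add_zero] at eq1
      exact eq1
  obtain ⟨y, hy⟩ := hsolv
  have star : ∀ v, (A.mulVec y) v + d v * y v + y v = d v := by
    intro v; rw [← hMapp, hy]
  -- y vanishes outside W
  have yW : ∀ v, v ∉ W → y v = 0 := by
    intro v hv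
    have h1 : (A.mulVec y) v = 0 := by
      simp only [Matrix.mulVec, dotProduct]
      apply Finset.sum_eq_zero
      intro u _
      rw [hAW v u hv, zero_mul]
    have h2 : d v = 0 := by
      show (∑ u, A v u) = 0
      exact Finset.sum_eq_zero fun u _ => hAW v u hv
    have := star v
    rw [h1, h2, zero_add, zero_mul, zero_add] at this
    exact this
  set Y : Finset V := W.filter (fun v => y v = 1) with hYdef
  set X : Finset V := W \ Y with hXdef
  have hYsub : Y ⊆ W := Finset.filter_subset _ _
  have ycast : ∀ v, y v = if v ∈ Y then 1 else 0 := by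
    intro v
    by_cases hv : v ∈ Y
    · rw [if_pos hv]; exact (Finset.mem_filter.mp hv).2
    · rw [if_neg hv]
      by_cases hw : v ∈ W
      · rcases zmod2_cases (y v) with h | h
        · exact h
        · exact absurd (Finset.mem_filter.mpr ⟨hw, h⟩) hv
      · exact yW v hw
  -- counting lemma
  have keycnt : ∀ v ∈ W, ∀ T : Finset V, T ⊆ W → (∀ u, (y u = 1 ∧ u ∈ W) ↔ u ∈ T) →
      True := fun _ _ _ _ _ => trivial
  have cntY : ∀ v ∈ W, (A.mulVec y) v = ((Y.filter (fun u => G.Adj v u)).card : ZMod 2) := by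
    intro v hv
    simp only [Matrix.mulVec, dotProduct]
    have : ∀ u, A v u * y u = if u ∈ Y.filter (fun u => G.Adj v u) then 1 else 0 := by
      intro u
      rw [ycast u]
      by_cases h1 : u ∈ Y <;> by_cases h2 : G.Adj v u
      · rw [if_pos h1, if_pos (Finset.mem_filter.mpr ⟨h1, h2⟩), mul_one]
        simp only [hAdef]
        rw [if_pos ⟨hv, hYsub h1, h2⟩]
      · rw [if_pos h1, if_neg (fun hh => h2 (Finset.mem_filter.mp hh).2), mul_one]
        simp only [hAdef]
        rw [if_neg (fun hh => h2 hh.2.2)]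
      · rw [if_neg h1, mul_zero, if_neg (fun hh => h1 (Finset.mem_filter.mp hh).1)]
      · rw [if_neg h1, mul_zero, if_neg (fun hh => h1 (Finset.mem_filter.mp hh).1)]
    rw [Finset.sum_congr rfl fun u _ => this u]
    rw [Finset.sum_ite_mem, Finset.univ_inter, Finset.sum_const, nsmul_eq_mul, mul_one]
  have cntW : ∀ v ∈ W, d v = ((W.filter (fun u => G.Adj v u)).card : ZMod 2) := by
    intro v hv
    show (∑ u, A v u) = _
    have : ∀ u, A v u = if u ∈ W.filter (fun u => G.Adj v u) then 1 else 0 := by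
      intro u
      simp only [hAdef]
      by_cases h1 : u ∈ W <;> by_cases h2 : G.Adj v u
      · rw [if_pos ⟨hv, h1, h2⟩, if_pos (Finset.mem_filter.mpr ⟨h1, h2⟩)]
      · rw [if_neg (fun hh => h2 hh.2.2), if_neg (fun hh => h2 (Finset.mem_filter.mp hh).2)]
      · rw [if_neg (fun hh => h1 hh.2.1), if_neg (fun hh => h1 (Finset.mem_filter.mp hh).1)]
      · rw [if_neg (fun hh => h1 hh.2.1), if_neg (fun hh => h1 (Finset.mem_filter.mp hh).1)]
    rw [Finset.sum_congr rfl fun u _ => this u]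
    rw [Finset.sum_ite_mem, Finset.univ_inter, Finset.sum_const, nsmul_eq_mul, mul_one]
  -- Y vertices have odd degree in Y
  have hOddY : ∀ v ∈ Y, Odd ((Y.filter (fun u => G.Adj v u)).card) := by
    intro v hvY
    have hvW := hYsub hvY
    have hyv : y v = 1 := (Finset.mem_filter.mp hvY).2
    have := star v
    rw [cntY v hvW, hyv, mul_one] at this
    -- cast + d v + 1 = d v
    have h2 : ((Y.filter (fun u => G.Adj v u)).card : ZMod 2) = 1 := by
      have h4 : (2 : ZMod 2) = 0 := by decide
      linear_combination this - h4
    exact (cast_eq_one_iff_odd _).mp h2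
  -- X vertices have even degree in X
  have hunion : X ∪ Y = W := by
    rw [hXdef]; exact Finset.sdiff_union_of_subset hYsub
  have hEvenX : ∀ v ∈ X, Even ((X.filter (fun u => G.Adj v u)).card) := by
    intro v hvX
    have hvW : v ∈ W := (Finset.mem_sdiff.mp hvX).1
    have hvY : v ∉ Y := (Finset.mem_sdiff.mp hvX).2
    have hyv : y v = 0 := by rw [ycast, if_neg hvY]
    have h1 := star v
    rw [cntY v hvW, hyv, mul_zero, add_zero, add_zero, cntW v hvW] at h1
    have hsplit : (W.filter (fun u => G.Adj v u)).card
        = (X.filter (fun u => G.Adj v u)).card + (Y.filter (fun u => G.Adj v u)).card := by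
      rw [← hunion, Finset.filter_union]
      exact Finset.card_union_of_disjoint
        (Finset.disjoint_filter_filter Finset.sdiff_disjoint)
    have h2 : ((X.filter (fun u => G.Adj v u)).card : ZMod 2) = 0 := by
      rw [hsplit] at h1
      push_cast at h1
      linear_combination -h1
    exact (cast_eq_zero_iff_even _).mp h2
  have hYeven : Even Y.card := by
    have h0 := zAz y
    have hval : y ⬝ᵥ A.mulVec y = ((Y.card : ZMod 2)) := by
      simp only [dotProduct]
      have hterm : ∀ v, y v * (A.mulVec y) v = if v ∈ Y then 1 else 0 := by
        intro v
        by_cases hv : v ∈ Y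
        · rw [if_pos hv]
          have hvW := hYsub hv
          rw [cntY v hvW, (Finset.mem_filter.mp hv).2, one_mul]
          exact (cast_eq_one_iff_odd _).mpr (hOddY v hv)
        · rw [if_neg hv, ycast v, if_neg hv, zero_mul]
      rw [Finset.sum_congr rfl fun v _ => hterm v]
      rw [Finset.sum_ite_mem, Finset.univ_inter, Finset.sum_const, nsmul_eq_mul, mul_one]
    rw [hval] at h0
    exact (cast_eq_zero_iff_even _).mp h0
  exact ⟨X, Y, hunion, by rw [hXdef]; exact Finset.sdiff_disjoint, hEvenX, hOddY, hYeven⟩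

/-- One side of the join: a large even-degree part of odd size and a large
odd-degree part of even size. -/
lemma side (W : Finset V) (hW : W.Nonempty) :
    ∃ X Y : Finset V, X ⊆ W ∧ Y ⊆ W ∧ Disjoint X Y ∧ Odd X.card ∧ Even Y.card ∧
      W.card ≤ X.card + Y.card + 1 ∧
      (∀ v ∈ X, Even ((X.filter (fun u => G.Adj v u)).card)) ∧
      (∀ v ∈ Y, Odd ((Y.filter (fun u => G.Adj v u)).card)) := by
  classical
  obtain ⟨w0, hw0⟩ := hW
  set W' : Finset V := if Odd W.card then W else W.erase w0 with hW'def
  have hW'sub : W' ⊆ W := by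
    rw [hW'def]; split
    · exact le_refl W
    · exact Finset.erase_subset _ _
  have hpos : 1 ≤ W.card := Finset.card_pos.mpr ⟨w0, hw0⟩
  have hW'odd : Odd W'.card := by
    rw [hW'def]; split
    · assumption
    · rename_i h
      rw [Finset.card_erase_of_mem hw0]
      rw [Nat.odd_iff] at *
      omega
  have hW'card : W.card ≤ W'.card + 1 := by
    rw [hW'def]; split
    · omega
    · rw [Finset.card_erase_of_mem hw0]; omega
  obtain ⟨X, Y, hunion, hdisj, hX, hY, hYeven⟩ := gallai_even_odd G W'
  refine ⟨X, Y, ?_, ?_, hdisj, ?_, hYeven, ?_, hX, hY⟩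
  · exact fun x hx => hW'sub (hunion ▸ Finset.mem_union_left _ hx)
  · exact fun x hx => hW'sub (hunion ▸ Finset.mem_union_right _ hx)
  · have hsum : X.card + Y.card = W'.card := by
      rw [← Finset.card_union_of_disjoint hdisj, hunion]
    rcases hYeven with ⟨b, hb⟩
    rcases hW'odd with ⟨k, hk⟩
    rw [Nat.odd_iff]
    omega
  · have hsum : X.card + Y.card = W'.card := by
      rw [← Finset.card_union_of_disjoint hdisj, hunion]
    omega

/-- Two disjoint completely-joined parts with suitable degree parities form an odd set. -/
lemma oddset_join (A B : Finset V) (hd : Disjoint A B)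
    (hadj : ∀ a ∈ A, ∀ b ∈ B, G.Adj a b)
    (hA : ∀ v ∈ A, Odd ((A.filter (fun u => G.Adj v u)).card + B.card))
    (hB : ∀ v ∈ B, Odd ((B.filter (fun u => G.Adj v u)).card + A.card)) :
    G.IsOddSet ↑(A ∪ B) := by
  classical
  intro v hv
  have hv' : v ∈ A ∪ B := hv
  have hset : (↑(A ∪ B) : Set V) ∩ G.neighborSet v
      = ↑((A ∪ B).filter (fun u => G.Adj v u)) := by
    ext u
    simp only [Set.mem_inter_iff, Finset.coe_filter, Set.mem_setOf_eq,
      SimpleGraph.mem_neighborSet, Finset.mem_coe]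
    try tauto
  rw [hset, Set.ncard_coe_finset, Finset.filter_union,
    Finset.card_union_of_disjoint (Finset.disjoint_filter_filter hd)]
  rcases Finset.mem_union.mp hv' with hvA | hvB
  · have hBfull : B.filter (fun u => G.Adj v u) = B :=
      Finset.filter_true_of_mem (fun b hb => hadj v hvA b hb)
    rw [hBfull]
    exact hA v hvA
  · have hAfull : A.filter (fun u => G.Adj v u) = A :=
      Finset.filter_true_of_mem (fun a ha => (hadj a ha v hvB).symm)
    rw [hAfull, add_comm]
    exact hB v hvB

end joinsec

/-- If a finite graph `G` on `n` vertices admits a join, then it contains an odd set of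
size at least `2 * ⌈(n - 2) / 4⌉`. -/
theorem stmt0 {V : Type*} [Fintype V] (G : SimpleGraph V)
    (V1 V2 : Set V) (h1 : V1.Nonempty) (h2 : V2.Nonempty)
    (hdisj : Disjoint V1 V2) (hcover : V1 ∪ V2 = Set.univ)
    (hjoin : ∀ u ∈ V1, ∀ w ∈ V2, G.Adj u w) :
    ∃ S : Set V, G.IsOddSet S ∧
      2 * ⌈((Fintype.card V : ℚ) - 2) / 4⌉ ≤ (S.ncard : ℤ) := by
  classical
  set W1 := (Set.toFinite V1).toFinset with hW1def
  set W2 := (Set.toFinite V2).toFinset with hW2def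
  have hmem1 : ∀ v, v ∈ W1 ↔ v ∈ V1 := fun v => Set.Finite.mem_toFinset _
  have hmem2 : ∀ v, v ∈ W2 ↔ v ∈ V2 := fun v => Set.Finite.mem_toFinset _
  have hW1ne : W1.Nonempty := by obtain ⟨x, hx⟩ := h1; exact ⟨x, (hmem1 x).mpr hx⟩
  have hW2ne : W2.Nonempty := by obtain ⟨x, hx⟩ := h2; exact ⟨x, (hmem2 x).mpr hx⟩
  have hdisjF : Disjoint W1 W2 := by
    rw [Finset.disjoint_left]
    intro a ha hb
    exact Set.disjoint_left.mp hdisj ((hmem1 a).mp ha) ((hmem2 a).mp hb)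
  have hcardsum : W1.card + W2.card = Fintype.card V := by
    have huniv : W1 ∪ W2 = Finset.univ := by
      ext v
      simp only [Finset.mem_union, Finset.mem_univ, iff_true]
      have : v ∈ V1 ∪ V2 := hcover ▸ Set.mem_univ v
      rcases this with h | h
      · exact Or.inl ((hmem1 v).mpr h)
      · exact Or.inr ((hmem2 v).mpr h)
    rw [← Finset.card_union_of_disjoint hdisjF, huniv, Finset.card_univ]
  obtain ⟨X1, Y1, hX1s, hY1s, hdj1, hX1odd, hY1even, hcard1, hX1deg, hY1deg⟩ :=
    side G W1 hW1ne
  obtain ⟨X2, Y2, hX2s, hY2s, hdj2, hX2odd, hY2even, hcard2, hX2deg, hY2deg⟩ :=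
    side G W2 hW2ne
  have hadj : ∀ (A B : Finset V), A ⊆ W1 → B ⊆ W2 → ∀ a ∈ A, ∀ b ∈ B, G.Adj a b := by
    intro A B hAs hBs a ha b hb
    exact hjoin a ((hmem1 a).mp (hAs ha)) b ((hmem2 b).mp (hBs hb))
  have hdisjAB : ∀ (A B : Finset V), A ⊆ W1 → B ⊆ W2 → Disjoint A B := by
    intro A B hAs hBs
    exact Finset.disjoint_of_subset_left hAs (Finset.disjoint_of_subset_right hBs hdisjF)
  -- the two candidate odd sets
  have hS1 : G.IsOddSet ↑(X1 ∪ X2) := by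
    apply oddset_join G _ _ (hdisjAB _ _ hX1s hX2s) (hadj _ _ hX1s hX2s)
    · intro v hv; exact (hX1deg v hv).add_odd hX2odd
    · intro v hv
      have := hadj X1 X2 hX1s hX2s
      exact (hX2deg v hv).add_odd hX1odd
  have hS2 : G.IsOddSet ↑(Y1 ∪ Y2) := by
    apply oddset_join G _ _ (hdisjAB _ _ hY1s hY2s) (hadj _ _ hY1s hY2s)
    · intro v hv; exact (hY1deg v hv).add_even hY2even
    · intro v hv; exact (hY2deg v hv).add_even hY1even
  -- arithmetic
  set c : ℤ := ⌈((Fintype.card V : ℚ) - 2) / 4⌉ with hcdef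
  have hc4 : 4 * c ≤ (Fintype.card V : ℤ) + 1 := by
    have h := Int.ceil_lt_add_one (((Fintype.card V : ℚ) - 2) / 4)
    have h2 : (c : ℚ) < ((Fintype.card V : ℚ) - 2) / 4 + 1 := h
    have h3 : (4 * c : ℚ) < (Fintype.card V : ℚ) + 2 := by linarith
    have h4 : (4 * c : ℤ) < (Fintype.card V : ℤ) + 2 := by exact_mod_cast h3
    omega
  rcases hX1odd with ⟨a1, ha1⟩
  rcases hX2odd with ⟨a2, ha2⟩
  rcases hY1even with ⟨b1, hb1⟩
  rcases hY2even with ⟨b2, hb2⟩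
  by_cases hcase : Y1.card + Y2.card ≤ X1.card + X2.card
  · refine ⟨↑(X1 ∪ X2), hS1, ?_⟩
    rw [Set.ncard_coe_finset, Finset.card_union_of_disjoint (hdisjAB _ _ hX1s hX2s)]
    omega
  · refine ⟨↑(Y1 ∪ Y2), hS2, ?_⟩
    rw [Set.ncard_coe_finset, Finset.card_union_of_disjoint (hdisjAB _ _ hY1s hY2s)]
    omega
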